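/- Let k and m be positive integers and suppose L is a positive integer such that p(n + L, k) ≡ p(n, k) (mod m) for all natural numbers n. Then p(n + m·(k+1)·L, k+1) ≡ p(n, k+1) (mod m) for all natural numbers n; that is, m·(k+1)·L is a period of p(·, k+1) modulo m. -/

import Mathlib

/-- `p n k` is the number of partitions of `n` into parts each of size at most `k`
(with `p 0 k = 1`). -/
def p (n k : ℕ) : ℕ :=
  (Finset.univ.filter (fun P : n.Partition => ∀ i ∈ P.parts, i ≤ k)).card

lemma p_rec (n k : ℕ) : p (n + (k+1)) (k+1) = p (n + (k+1)) k + p n (k+1) := by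
  classical
  unfold p
  rw [← Finset.card_filter_add_card_filter_not
      (s := Finset.univ.filter fun P : (n+(k+1)).Partition => ∀ i ∈ P.parts, i ≤ k+1)
      (p := fun P => (k+1) ∉ P.parts)]
  congr 1
  · congr 1
    ext P
    simp only [Finset.mem_filter, Finset.mem_univ, true_and]
    constructor
    · rintro ⟨h1, h2⟩ i hi
      have := h1 i hi
      have : i ≠ k+1 := fun e => h2 (e ▸ hi)
      omega
    · intro h1
      exact ⟨fun i hi => le_trans (h1 i hi) (Nat.le_succ k),
        fun hmem => by have := h1 _ hmem; omega⟩
  · rw [Finset.filter_filter]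
    apply Finset.card_bij (fun P hP =>
      (⟨P.parts.erase (k+1),
        fun {i} hi => P.parts_pos (Multiset.mem_of_mem_erase hi),
        by
          have hmem : (k+1) ∈ P.parts := by
            simp only [Finset.mem_filter] at hP
            exact not_not.mp hP.2.2
          have hc := Multiset.cons_erase hmem
          have hs := P.parts_sum
          rw [← hc, Multiset.sum_cons] at hs
          omega⟩ : n.Partition))
    · intro P hP
      simp only [Finset.mem_filter, Finset.mem_univ, true_and] at hP ⊢
      intro i hi
      exact hP.1 i (Multiset.mem_of_mem_erase hi)
    · intro P hP Q hQ heq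
      simp only [Finset.mem_filter] at hP hQ
      have hmP : (k+1) ∈ P.parts := not_not.mp hP.2.2
      have hmQ : (k+1) ∈ Q.parts := not_not.mp hQ.2.2
      have : P.parts.erase (k+1) = Q.parts.erase (k+1) := congrArg Nat.Partition.parts heq
      have : P.parts = Q.parts := by
        rw [← Multiset.cons_erase hmP, ← Multiset.cons_erase hmQ, this]
      exact Nat.Partition.ext this
    · intro Q hQ
      simp only [Finset.mem_filter, Finset.mem_univ, true_and] at hQ
      refine ⟨⟨(k+1) ::ₘ Q.parts,
        fun {i} hi => ?_, by rw [Multiset.sum_cons, Q.parts_sum]; omega⟩, ?_, ?_⟩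
      · rcases Multiset.mem_cons.mp hi with h1 | h1
        · omega
        · exact Q.parts_pos h1
      · simp only [Finset.mem_filter, Finset.mem_univ, true_and]
        constructor
        · intro i hi
          rcases Multiset.mem_cons.mp hi with h1 | h1
          · omega
          · exact hQ i h1
        · simp [Multiset.mem_cons]
      · apply Nat.Partition.ext
        simp [Multiset.erase_cons_head]

lemma p_tele (k : ℕ) : ∀ t n : ℕ, p (n + (k+1)*t) (k+1)
    = p n (k+1) + ∑ i ∈ Finset.range t, p (n + (k+1)*(i+1)) k := by
  intro t
  induction t with
  | zero => simp
  | succ t ih =>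
    intro n
    have h1 : n + (k+1)*(t+1) = (n + (k+1)*t) + (k+1) := by ring
    rw [h1, p_rec, ih, Finset.sum_range_succ]
    have h2 : n + (k+1)*t + (k+1) = n + (k+1)*(t+1) := by ring
    rw [h2]
    ring

lemma modEq_sum (m : ℕ) (s : Finset ℕ) (f g : ℕ → ℕ)
    (h : ∀ i ∈ s, f i ≡ g i [MOD m]) :
    (∑ i ∈ s, f i) ≡ (∑ i ∈ s, g i) [MOD m] := by
  classical
  induction s using Finset.induction with
  | empty => rfl
  | insert _ _ hx ih =>
    rw [Finset.sum_insert hx, Finset.sum_insert hx]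
    exact (h _ (Finset.mem_insert_self _ _)).add
      (ih fun i hi => h i (Finset.mem_insert_of_mem hi))

def Faux (k L x : ℕ) : ℕ := ∑ i ∈ Finset.range L, p (x + (k+1)*(i+1)) k

theorem stmt_4 (k m L : ℕ) (hk : 0 < k) (hm : 0 < m) (hL : 0 < L)
    (h : ∀ n : ℕ, p (n + L) k ≡ p n k [MOD m]) :
    ∀ n : ℕ, p (n + m * (k + 1) * L) (k + 1) ≡ p n (k + 1) [MOD m] := by
  intro n
  have hFL : ∀ x, Faux k L (x + L) ≡ Faux k L x [MOD m] := by
    intro x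
    apply modEq_sum
    intro i _
    have e : x + L + (k+1)*(i+1) = (x + (k+1)*(i+1)) + L := by ring
    rw [e]
    exact h _
  have hFt : ∀ t x, Faux k L (x + t * L) ≡ Faux k L x [MOD m] := by
    intro t
    induction t with
    | zero => intro x; simpa using Nat.ModEq.refl _
    | succ t ih =>
      intro x
      have e : x + (t+1)*L = (x + t*L) + L := by ring
      rw [e]
      exact (hFL _).trans (ih x)
  have key : ∀ s, p (n + (k+1)*(L*s)) (k+1) ≡ p n (k+1) + s * Faux k L n [MOD m] := by
    intro s
    induction s with
    | zero => simpa using Nat.ModEq.refl _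
    | succ s ih =>
      have h1 : n + (k+1)*(L*(s+1)) = (n + (k+1)*(L*s)) + (k+1)*L := by ring
      rw [h1, p_tele k L (n + (k+1)*(L*s))]
      have h2 : Faux k L (n + (k+1)*(L*s)) ≡ Faux k L n [MOD m] := by
        have e : n + (k+1)*(L*s) = n + ((k+1)*s)*L := by ring
        rw [e]; exact hFt _ n
      calc p (n + (k+1)*(L*s)) (k+1) + Faux k L (n + (k+1)*(L*s))
          ≡ (p n (k+1) + s * Faux k L n) + Faux k L n [MOD m] := Nat.ModEq.add ih h2
        _ = p n (k+1) + (s+1) * Faux k L n := by ring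
  have hidx : n + m * (k+1) * L = n + (k+1)*(L*m) := by ring
  rw [hidx]
  refine (key m).trans ?_
  have : p n (k+1) + m * Faux k L n ≡ p n (k+1) + 0 [MOD m] :=
    Nat.ModEq.add_left _ ((Nat.modEq_zero_iff_dvd).mpr (dvd_mul_right m _))
  simpa using this
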